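/- Define, for complex s, the Euler product J_4(s) = ∏_{p prime} (1−p^{−2s})³·(1−p^{−4s})³ / ((1+2p^{−s})·(1−p^{−s})²·(1−p^{−3s})²). Then the product defining J_4(s) converges (is multipliable) for every complex s with Re s > 1/5, and for every complex s with Re s > 1 one has (∑_{n=1}^{∞} (−2)^{Ω(n)} n^{−s}) · ζ(s)²·ζ(3s)² = ζ(2s)³·ζ(4s)³·J_4(s). -/

import Mathlib

open ArithmeticFunction
open scoped ArithmeticFunction.Omega

/-- The factor at the prime `p` in the Euler product defining `J₄(s)`. -/
noncomputable def J4Term (s : ℂ) (p : Nat.Primes) : ℂ :=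
  (1 - ((p : ℕ) : ℂ) ^ (-(2 * s))) ^ 3 * (1 - ((p : ℕ) : ℂ) ^ (-(4 * s))) ^ 3 /
    ((1 + 2 * ((p : ℕ) : ℂ) ^ (-s)) * (1 - ((p : ℕ) : ℂ) ^ (-s)) ^ 2 *
      (1 - ((p : ℕ) : ℂ) ^ (-(3 * s))) ^ 2)

section Aux
open Complex

lemma hasProd_zero_of_eq_zero {ι : Type*} {f : ι → ℂ} {b : ι} (h : f b = 0) : HasProd f 0 := by
  refine tendsto_const_nhds.congr' ?_
  filter_upwards [Filter.eventually_ge_atTop ({b} : Finset ι)] with t ht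
  exact (Finset.prod_eq_zero (ht (Finset.mem_singleton_self b)) h).symm

lemma J4_bound {x : ℂ} (hx : ‖x‖ ≤ 1/4) :
    ((1 + 2*x) * (1 - x)^2 * (1 - x^3)^2 ≠ 0) ∧
    ‖(1 - x^2)^3 * (1 - x^4)^3 / ((1 + 2*x) * (1 - x)^2 * (1 - x^3)^2) - 1‖ ≤ 160 * ‖x‖^5 := by
  have hx0 : (0:ℝ) ≤ ‖x‖ := norm_nonneg x
  have hx1 : ‖x‖ ≤ 1 := hx.trans (by norm_num)
  have hk : ∀ k : ℕ, ‖x‖^k ≤ 1 := fun k => pow_le_one₀ hx0 hx1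
  have h2x : ‖2*x‖ ≤ 1/2 := by rw [norm_mul]; simp only [Complex.norm_ofNat]; linarith
  have hl1 : (1:ℝ)/2 ≤ ‖1 + 2*x‖ := by
    have := norm_sub_norm_le (1:ℂ) (-(2*x))
    simp only [norm_one, norm_neg, sub_neg_eq_add] at this
    linarith
  have hl2 : (3:ℝ)/4 ≤ ‖1 - x‖ := by
    have := norm_sub_norm_le (1:ℂ) x
    simp only [norm_one] at this
    linarith
  have hl3 : (63:ℝ)/64 ≤ ‖1 - x^3‖ := by
    have h := norm_sub_norm_le (1:ℂ) (x^3)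
    have : ‖x^3‖ ≤ 1/64 := by
      rw [norm_pow]
      calc ‖x‖^3 ≤ (1/4:ℝ)^3 := by gcongr
        _ = 1/64 := by norm_num
    simp only [norm_one] at h
    linarith
  have hDnorm : (1:ℝ)/4 ≤ ‖(1 + 2*x) * (1 - x)^2 * (1 - x^3)^2‖ := by
    rw [norm_mul, norm_mul, norm_pow, norm_pow]
    calc (1:ℝ)/4 ≤ (1/2) * (3/4:ℝ)^2 * (63/64:ℝ)^2 := by norm_num
      _ ≤ ‖1 + 2*x‖ * ‖1 - x‖^2 * ‖1 - x^3‖^2 := by gcongr <;> norm_num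
  have hD : (1 + 2*x) * (1 - x)^2 * (1 - x^3)^2 ≠ 0 := by
    intro h; rw [h, norm_zero] at hDnorm; linarith
  refine ⟨hD, ?_⟩
  have hid : (1 - x^2)^3 * (1 - x^4)^3 / ((1 + 2*x) * (1 - x)^2 * (1 - x^3)^2) - 1
      = x^5 * (-6 + 11*x - 3*x^3 - 2*x^4 - 6*x^5 + 8*x^7 - 3*x^11 + x^13) /
        ((1 + 2*x) * (1 - x)^2 * (1 - x^3)^2) := by
    rw [div_sub_one hD]
    congr 1
    ring
  have hQ : ‖-6 + 11*x - 3*x^3 - 2*x^4 - 6*x^5 + 8*x^7 - 3*x^11 + x^13‖ ≤ 40 := by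
    calc ‖(-6:ℂ) + 11*x - 3*x^3 - 2*x^4 - 6*x^5 + 8*x^7 - 3*x^11 + x^13‖
        ≤ ‖(-6:ℂ) + 11*x - 3*x^3 - 2*x^4 - 6*x^5 + 8*x^7 - 3*x^11‖ + ‖x^13‖ := norm_add_le _ _
      _ ≤ (‖(-6:ℂ) + 11*x - 3*x^3 - 2*x^4 - 6*x^5 + 8*x^7‖ + ‖3*x^11‖) + ‖x^13‖ := by
          gcongr; exact norm_sub_le _ _
      _ ≤ ((‖(-6:ℂ) + 11*x - 3*x^3 - 2*x^4 - 6*x^5‖ + ‖8*x^7‖) + ‖3*x^11‖) + ‖x^13‖ := by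
          gcongr; exact norm_add_le _ _
      _ ≤ (((‖(-6:ℂ) + 11*x - 3*x^3 - 2*x^4‖ + ‖6*x^5‖) + ‖8*x^7‖) + ‖3*x^11‖) + ‖x^13‖ := by
          gcongr; exact norm_sub_le _ _
      _ ≤ ((((‖(-6:ℂ) + 11*x - 3*x^3‖ + ‖2*x^4‖) + ‖6*x^5‖) + ‖8*x^7‖) + ‖3*x^11‖) + ‖x^13‖ := by
          gcongr; exact norm_sub_le _ _
      _ ≤ (((((‖(-6:ℂ) + 11*x‖ + ‖3*x^3‖) + ‖2*x^4‖) + ‖6*x^5‖) + ‖8*x^7‖) + ‖3*x^11‖) + ‖x^13‖ := by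
          gcongr; exact norm_sub_le _ _
      _ ≤ ((((((‖(-6:ℂ)‖ + ‖11*x‖) + ‖3*x^3‖) + ‖2*x^4‖) + ‖6*x^5‖) + ‖8*x^7‖) + ‖3*x^11‖) + ‖x^13‖ := by
          gcongr; exact norm_add_le _ _
      _ ≤ 40 := by
          have b0 : ‖(-6:ℂ)‖ = 6 := by norm_num
          have b1 : ‖(11:ℂ)*x‖ ≤ 11 := by
            rw [norm_mul, Complex.norm_ofNat]; linarith
          have b3 : ‖(3:ℂ)*x^3‖ ≤ 3 := by
            rw [norm_mul, norm_pow, Complex.norm_ofNat]; linarith [hk 3]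
          have b4 : ‖(2:ℂ)*x^4‖ ≤ 2 := by
            rw [norm_mul, norm_pow, Complex.norm_ofNat]; linarith [hk 4]
          have b5 : ‖(6:ℂ)*x^5‖ ≤ 6 := by
            rw [norm_mul, norm_pow, Complex.norm_ofNat]; linarith [hk 5]
          have b7 : ‖(8:ℂ)*x^7‖ ≤ 8 := by
            rw [norm_mul, norm_pow, Complex.norm_ofNat]; linarith [hk 7]
          have b11 : ‖(3:ℂ)*x^11‖ ≤ 3 := by
            rw [norm_mul, norm_pow, Complex.norm_ofNat]; linarith [hk 11]
          have b13 : ‖x^13‖ ≤ 1 := by rw [norm_pow]; exact hk 13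
          linarith
  rw [hid, norm_div, norm_mul, norm_pow]
  have hDpos : (0:ℝ) < ‖(1 + 2*x) * (1 - x)^2 * (1 - x^3)^2‖ := by linarith
  calc ‖x‖^5 * ‖-6 + 11*x - 3*x^3 - 2*x^4 - 6*x^5 + 8*x^7 - 3*x^11 + x^13‖ /
        ‖(1 + 2*x) * (1 - x)^2 * (1 - x^3)^2‖
      ≤ ‖x‖^5 * 40 / (1/4) := by
        gcongr
      _ = 160 * ‖x‖^5 := by ring
lemma J4Term_eq (s : ℂ) (p : Nat.Primes) :
    J4Term s p = (1 - (((p:ℕ):ℂ)^(-s))^2)^3 * (1 - (((p:ℕ):ℂ)^(-s))^4)^3 /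
      ((1 + 2*((p:ℕ):ℂ)^(-s)) * (1 - ((p:ℕ):ℂ)^(-s))^2 * (1 - (((p:ℕ):ℂ)^(-s))^3)^2) := by
  have h2 : -(2*s) = ((2:ℕ):ℂ) * (-s) := by push_cast; ring
  have h3 : -(3*s) = ((3:ℕ):ℂ) * (-s) := by push_cast; ring
  have h4 : -(4*s) = ((4:ℕ):ℂ) * (-s) := by push_cast; ring
  rw [J4Term, h2, h3, h4, Complex.cpow_nat_mul, Complex.cpow_nat_mul, Complex.cpow_nat_mul]

lemma J4_multipliable {s : ℂ} (hs : 1/5 < s.re) : Multipliable (J4Term s) := by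
  by_cases hzero : ∃ p, J4Term s p = 0
  · obtain ⟨p, hp⟩ := hzero
    exact ⟨0, hasProd_zero_of_eq_zero hp⟩
  · push_neg at hzero
    have key : Summable (fun p : Nat.Primes => Complex.log (J4Term s p)) := by
      apply Summable.of_norm_bounded_eventually
        (g := fun p : Nat.Primes => 240 * ((p:ℕ):ℝ)^(-s.re*5))
      · -- summability of the comparison
        have h1 : Summable (fun n : ℕ => 240 * ((n:ℕ):ℝ)^(-s.re*5)) :=
          (Real.summable_nat_rpow.mpr (by linarith)).mul_left 240
        exact h1.comp_injective Nat.Primes.coe_nat_injective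
      · -- eventual bound
        rw [Filter.eventually_cofinite]
        have hfin : Set.Finite {p : Nat.Primes | (p:ℕ) < 1024} := by
          have : {p : Nat.Primes | (p:ℕ) < 1024} = ((↑) : Nat.Primes → ℕ) ⁻¹' (Set.Iio 1024) := rfl
          rw [this]
          exact Set.Finite.preimage Nat.Primes.coe_nat_injective.injOn (Set.finite_Iio _)
        apply hfin.subset
        intro p hp
        simp only [Set.mem_setOf_eq, not_le] at hp ⊢
        by_contra hge
        push_neg at hge
        refine absurd hp (not_lt.mpr ?_)
        -- now prove the bound for p ≥ 1024
        set x := ((p:ℕ):ℂ)^(-s) with hxdef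
        have hppos : (0:ℕ) < (p:ℕ) := p.prop.pos
        have hxnorm : ‖x‖ = ((p:ℕ):ℝ)^(-s.re) := by
          rw [hxdef, Complex.norm_natCast_cpow_of_pos hppos, Complex.neg_re]
        have hp1 : (1:ℝ) ≤ ((p:ℕ):ℝ) := by exact_mod_cast hppos
        have hx4 : ‖x‖ ≤ 1/4 := by
          rw [hxnorm, Real.rpow_neg (by linarith)]
          rw [inv_le_comm₀ (by positivity) (by norm_num)]
          calc (1/4 : ℝ)⁻¹ = ((4:ℝ)^(5:ℕ))^(((5:ℕ):ℝ)⁻¹) := by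
                rw [Real.pow_rpow_inv_natCast (by norm_num) (by norm_num)]
                norm_num
            _ ≤ ((p:ℕ):ℝ)^(((5:ℕ):ℝ)⁻¹) := by
                apply Real.rpow_le_rpow (by positivity) ?_ (by positivity)
                have : ((1024:ℕ):ℝ) ≤ ((p:ℕ):ℝ) := by exact_mod_cast hge
                norm_num at this ⊢
                linarith
            _ ≤ ((p:ℕ):ℝ)^(s.re) := by
                apply Real.rpow_le_rpow_of_exponent_le hp1
                push_cast
                linarith
        have hb := J4_bound hx4
        have hJx : J4Term s p = 1 + ((1 - x^2)^3 * (1 - x^4)^3 /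
            ((1 + 2*x) * (1 - x)^2 * (1 - x^3)^2) - 1) := by
          rw [J4Term_eq]; ring
        have hsmall : ‖(1 - x^2)^3 * (1 - x^4)^3 /
            ((1 + 2*x) * (1 - x)^2 * (1 - x^3)^2) - 1‖ ≤ 1/2 := by
          refine hb.2.trans ?_
          have : ‖x‖^5 ≤ (1/4:ℝ)^5 := pow_le_pow_left₀ (norm_nonneg x) hx4 5
          nlinarith
        calc ‖Complex.log (J4Term s p)‖
            ≤ 3/2 * ‖(1 - x^2)^3 * (1 - x^4)^3 /
              ((1 + 2*x) * (1 - x)^2 * (1 - x^3)^2) - 1‖ := by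
              rw [hJx]
              exact Complex.norm_log_one_add_half_le_self hsmall
          _ ≤ 3/2 * (160 * ‖x‖^5) := by gcongr; exact hb.2
          _ = 240 * ‖x‖^5 := by ring
          _ = 240 * ((p:ℕ):ℝ)^(-s.re*5) := by
              rw [hxnorm, ← Real.rpow_natCast (((p:ℕ):ℝ)^(-s.re)) 5,
                ← Real.rpow_mul (Nat.cast_nonneg _)]
              norm_num
    have := Complex.multipliable_of_summable_log key
    exact this
end Aux

noncomputable def twoOmega (sg : ℝ) (hsg : sg ≠ 0) : ℕ →* ℝ where
  toFun n := 2^(Ω n) * (n:ℝ)^(-sg)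
  map_one' := by simp
  map_mul' m n := by
    show (2:ℝ)^(Ω (m*n)) * (((m*n : ℕ)):ℝ)^(-sg)
      = (2^(Ω m) * (m:ℝ)^(-sg)) * (2^(Ω n) * (n:ℝ)^(-sg))
    rcases eq_or_ne m 0 with rfl | hm
    · simp [Real.zero_rpow (neg_ne_zero.mpr hsg)]
    rcases eq_or_ne n 0 with rfl | hn
    · simp [Real.zero_rpow (neg_ne_zero.mpr hsg)]
    rw [cardFactors_mul hm hn, Nat.cast_mul,
      Real.mul_rpow (Nat.cast_nonneg m) (Nat.cast_nonneg n), pow_add]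
    ring

lemma twoOmega_summable {sg : ℝ} (hsg : 1 < sg) :
    Summable (fun n : ℕ => 2^(Ω n) * (n:ℝ)^(-sg)) := by
  have hsg0 : (0:ℝ) < sg := by linarith
  have hnonneg : ∀ n : ℕ, 0 ≤ 2^(Ω n) * (n:ℝ)^(-sg) := fun n => by positivity
  set t₀ : ℝ := 2 * (2:ℝ)^(-sg) with ht₀def
  have ht₀lt : t₀ < 1 := by
    rw [ht₀def, Real.rpow_neg (by norm_num), mul_inv_lt_iff₀ (by positivity), one_mul]
    calc (2:ℝ) = (2:ℝ)^(1:ℝ) := (Real.rpow_one 2).symm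
      _ < (2:ℝ)^sg := Real.rpow_lt_rpow_of_exponent_lt one_lt_two hsg
  have ht₀0 : 0 ≤ t₀ := by positivity
  set c : ℝ := (1 - t₀)⁻¹ with hcdef
  have hc1 : c * (1 - t₀) = 1 := inv_mul_cancel₀ (by linarith)
  have hc0 : 0 < c := inv_pos.mpr (by linarith)
  -- value at primes
  have hprime : ∀ {p : ℕ}, p.Prime → twoOmega sg (by linarith) p = 2 * (p:ℝ)^(-sg) := by
    intro p hp
    simp only [twoOmega, MonoidHom.coe_mk, OneHom.coe_mk, cardFactors_apply_prime hp, pow_one]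
  have hple : ∀ {p : ℕ}, p.Prime → twoOmega sg (by linarith) p ≤ t₀ := by
    intro p hp
    rw [hprime hp, ht₀def]
    have h2p : (2:ℝ) ≤ (p:ℝ) := by exact_mod_cast hp.two_le
    have hmono : (p:ℝ)^(-sg) ≤ (2:ℝ)^(-sg) := by
      rw [Real.rpow_neg (by linarith), Real.rpow_neg (by norm_num)]
      rw [inv_le_inv₀ (by positivity) (by positivity)]
      exact Real.rpow_le_rpow (by norm_num) h2p (le_of_lt hsg0)
    linarith
  have hpnonneg : ∀ p : ℕ, 0 ≤ twoOmega sg (by linarith) p := fun p => by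
    simp only [twoOmega, MonoidHom.coe_mk, OneHom.coe_mk]; positivity
  have hnorm : ∀ {p : ℕ}, p.Prime → ‖twoOmega sg (by linarith) p‖ < 1 := by
    intro p hp
    rw [Real.norm_eq_abs, abs_of_nonneg (hpnonneg p)]
    exact lt_of_le_of_lt (hple hp) ht₀lt
  -- the sum over primes is bounded by T
  have hT : Summable (fun n : ℕ => 2 * (n:ℝ)^(-sg)) :=
    (Real.summable_nat_rpow.mpr (by linarith)).mul_left 2
  set T : ℝ := ∑' n : ℕ, 2 * (n:ℝ)^(-sg) with hTdef
  set B : ℝ := Real.exp (c * T) with hBdef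
  -- bound partial products
  have hPbound : ∀ N : ℕ, ∏ p ∈ N.primesBelow, (1 - twoOmega sg (by linarith) p)⁻¹ ≤ B := by
    intro N
    have h1 : ∀ p ∈ N.primesBelow, (1 - twoOmega sg (by linarith) p)⁻¹ ≤ Real.exp (c * twoOmega sg (by linarith) p) := by
      intro p hp
      have hpp : p.Prime := Nat.prime_of_mem_primesBelow hp
      have h1t : 0 < 1 - twoOmega sg (by linarith) p := by linarith [lt_of_le_of_lt (hple hpp) ht₀lt]
      have step1 : (1 - twoOmega sg (by linarith) p)⁻¹ ≤ 1 + c * twoOmega sg (by linarith) p := by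
        rw [inv_le_iff_one_le_mul₀ h1t]
        have hkey : 1 ≤ c * (1 - twoOmega sg (by linarith) p) := by
          calc (1:ℝ) = c * (1 - t₀) := hc1.symm
            _ ≤ c * (1 - twoOmega sg (by linarith) p) := by
                apply mul_le_mul_of_nonneg_left ?_ hc0.le
                linarith [hple hpp]
        nlinarith [mul_nonneg (hpnonneg p) (sub_nonneg.mpr hkey)]
      exact step1.trans (by linarith [Real.add_one_le_exp (c * twoOmega sg (by linarith) p)])
    calc ∏ p ∈ N.primesBelow, (1 - twoOmega sg (by linarith) p)⁻¹
        ≤ ∏ p ∈ N.primesBelow, Real.exp (c * twoOmega sg (by linarith) p) := by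
          apply Finset.prod_le_prod ?_ h1
          intro p hp
          have hpp : p.Prime := Nat.prime_of_mem_primesBelow hp
          have h1t : 0 < 1 - twoOmega sg (by linarith) p := by linarith [lt_of_le_of_lt (hple hpp) ht₀lt]
          positivity
      _ = Real.exp (∑ p ∈ N.primesBelow, c * twoOmega sg (by linarith) p) := (Real.exp_sum _ _).symm
      _ ≤ B := by
          rw [hBdef, Real.exp_le_exp]
          rw [← Finset.mul_sum]
          apply mul_le_mul_of_nonneg_left ?_ (le_of_lt hc0)
          calc ∑ p ∈ N.primesBelow, twoOmega sg (by linarith) p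
              = ∑ p ∈ N.primesBelow, 2 * (p:ℝ)^(-sg) := by
                apply Finset.sum_congr rfl
                intro p hp
                exact hprime (Nat.prime_of_mem_primesBelow hp)
            _ ≤ T := Summable.sum_le_tsum _ (fun n _ => by positivity) hT
  -- now bound partial sums
  apply summable_of_sum_range_le hnonneg
  intro N
  have hsmooth := EulerProduct.summable_and_hasSum_smoothNumbers_prod_primesBelow_geometric
    (f := twoOmega sg (by linarith)) (fun {p} hp => hnorm hp) N
  have hsum := hsmooth.2
  calc ∑ n ∈ Finset.range N, 2^(Ω n) * (n:ℝ)^(-sg)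
      = ∑ n ∈ Finset.range N, Set.indicator (Nat.smoothNumbers N) (fun m => twoOmega sg (by linarith) m) n := by
        apply Finset.sum_congr rfl
        intro n hn
        rcases eq_or_ne n 0 with rfl | hn0
        · rw [Set.indicator_of_notMem (fun h => h.1 rfl)]
          simp [Real.zero_rpow (by linarith : -sg ≠ 0)]
        · rw [Set.indicator_of_mem]
          · simp only [twoOmega, MonoidHom.coe_mk, OneHom.coe_mk]
          · refine Nat.mem_smoothNumbers.mpr ⟨hn0, fun p hp => ?_⟩
            have hpn : p ∣ n := Nat.dvd_of_mem_primeFactorsList hp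
            have := Nat.le_of_dvd (Nat.pos_of_ne_zero hn0) hpn
            have := Finset.mem_range.mp hn
            omega
    _ ≤ ∑' n : ℕ, Set.indicator (Nat.smoothNumbers N) (fun m => twoOmega sg (by linarith) m) n := by
        apply Summable.sum_le_tsum
        · intro n _
          exact Set.indicator_nonneg (fun m _ => hpnonneg m) n
        · exact (summable_subtype_iff_indicator).mp hsum.summable
    _ = ∑' m : Nat.smoothNumbers N, twoOmega sg (by linarith) m := (tsum_subtype _ _).symm
    _ = ∏ p ∈ N.primesBelow, (1 - twoOmega sg (by linarith) p)⁻¹ := hsum.tsum_eq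
    _ ≤ B := hPbound N

section Part2
open Complex EulerProduct

/-- The completely multiplicative function `n ↦ (-2)^Ω(n) * n^(-s)`. -/
noncomputable def negTwoOmega (s : ℂ) (hs : s ≠ 0) : ℕ →*₀ ℂ where
  toFun n := (-2)^(Ω n) * (n:ℂ)^(-s)
  map_zero' := by
    show (-2:ℂ)^(Ω 0) * ((0:ℕ):ℂ)^(-s) = 0
    rw [Nat.cast_zero, Complex.zero_cpow (neg_ne_zero.mpr hs), mul_zero]
  map_one' := by simp
  map_mul' m n := by
    show (-2:ℂ)^(Ω (m*n)) * ((m*n : ℕ):ℂ)^(-s)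
      = ((-2)^(Ω m) * (m:ℂ)^(-s)) * ((-2)^(Ω n) * (n:ℂ)^(-s))
    rcases eq_or_ne m 0 with rfl | hm
    · simp [Complex.zero_cpow (neg_ne_zero.mpr hs)]
    rcases eq_or_ne n 0 with rfl | hn
    · simp [Complex.zero_cpow (neg_ne_zero.mpr hs)]
    rw [cardFactors_mul hm hn, pow_add, Nat.cast_mul]
    simp_rw [← Complex.ofReal_natCast,
      Complex.mul_cpow_ofReal_nonneg (Nat.cast_nonneg m) (Nat.cast_nonneg n)]
    ring

lemma negTwoOmega_summable {s : ℂ} (hs : 1 < s.re) :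
    Summable (fun n => ‖negTwoOmega s (ne_zero_of_one_lt_re hs) n‖) := by
  refine (twoOmega_summable hs).congr fun n => ?_
  rcases eq_or_ne n 0 with rfl | hn
  · have h0 : negTwoOmega s (ne_zero_of_one_lt_re hs) 0 = 0 := map_zero _
    rw [h0, norm_zero, cardFactors_zero, pow_zero, one_mul, Nat.cast_zero,
      Real.zero_rpow (neg_ne_zero.mpr (by linarith : s.re ≠ 0))]
  · show 2^(Ω n) * (n:ℝ)^(-s.re) = ‖(-2:ℂ)^(Ω n) * (n:ℂ)^(-s)‖
    rw [norm_mul, norm_pow, norm_neg,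
      Complex.norm_natCast_cpow_of_pos (Nat.pos_of_ne_zero hn), Complex.neg_re]
    norm_num

lemma norm_prime_cpow_lt_one (p : Nat.Primes) {w : ℂ} (hw : 0 < w.re) :
    ‖((p:ℕ):ℂ)^(-w)‖ < 1 := by
  rw [Complex.norm_natCast_cpow_of_pos p.prop.pos, Complex.neg_re]
  exact Real.rpow_lt_one_of_one_lt_of_neg (by exact_mod_cast p.prop.one_lt) (by linarith)

lemma one_sub_prime_cpow_ne_zero (p : Nat.Primes) {w : ℂ} (hw : 0 < w.re) :
    (1:ℂ) - ((p:ℕ):ℂ)^(-w) ≠ 0 := by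
  intro h
  have h1 : (1:ℂ) = ((p:ℕ):ℂ)^(-w) := sub_eq_zero.mp h
  have := norm_prime_cpow_lt_one p hw
  rw [← h1, norm_one] at this
  exact lt_irrefl 1 this

lemma one_add_two_prime_cpow_ne_zero (p : Nat.Primes) {s : ℂ} (hs : 1 < s.re) :
    (1:ℂ) + 2 * ((p:ℕ):ℂ)^(-s) ≠ 0 := by
  intro h
  have h1 : (2:ℂ) * ((p:ℕ):ℂ)^(-s) = -1 := by linear_combination h
  have h2 : ‖(2:ℂ) * ((p:ℕ):ℂ)^(-s)‖ = 1 := by rw [h1]; simp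
  have hp2 : (2:ℝ) ≤ ((p:ℕ):ℝ) := by exact_mod_cast p.prop.two_le
  have hnorm : ‖(2:ℂ) * ((p:ℕ):ℂ)^(-s)‖ < 1 := by
    rw [norm_mul, Complex.norm_ofNat,
      Complex.norm_natCast_cpow_of_pos p.prop.pos, Complex.neg_re]
    have hmono : ((p:ℕ):ℝ)^(-s.re) ≤ (2:ℝ)^(-s.re) := by
      rw [Real.rpow_neg (by linarith), Real.rpow_neg (by norm_num),
        inv_le_inv₀ (by positivity) (by positivity)]
      exact Real.rpow_le_rpow (by norm_num) hp2 (by linarith)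
    have h2lt : 2 * (2:ℝ)^(-s.re) < 1 := by
      rw [Real.rpow_neg (by norm_num), mul_inv_lt_iff₀ (by positivity), one_mul]
      calc (2:ℝ) = (2:ℝ)^(1:ℝ) := (Real.rpow_one 2).symm
        _ < (2:ℝ)^(s.re) := Real.rpow_lt_rpow_of_exponent_lt one_lt_two hs
    linarith
  rw [h2] at hnorm
  exact lt_irrefl 1 hnorm

lemma factor_identity {x1 x2 x3 x4 : ℂ} (h12 : 1+2*x1 ≠ 0) (h1 : 1-x1 ≠ 0)
    (h2 : 1-x2 ≠ 0) (h3 : 1-x3 ≠ 0) (h4 : 1-x4 ≠ 0) :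
    (1+2*x1)⁻¹ * ((1-x1)⁻¹ * (1-x1)⁻¹) * ((1-x3)⁻¹ * (1-x3)⁻¹)
      = (1-x2)⁻¹ * ((1-x2)⁻¹ * (1-x2)⁻¹) * ((1-x4)⁻¹ * ((1-x4)⁻¹ * (1-x4)⁻¹) *
        ((1-x2)^3 * (1-x4)^3 / ((1+2*x1) * (1-x1)^2 * (1-x3)^2))) := by
  rw [div_eq_mul_inv]
  rw [show ((1-x2)^3 * (1-x4)^3 * ((1+2*x1) * (1-x1)^2 * (1-x3)^2)⁻¹) =
    (1-x2)^3 * (1-x4)^3 * ((1+2*x1)⁻¹ * ((1-x1)⁻¹)^2 * ((1-x3)⁻¹)^2) by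
      rw [mul_inv, mul_inv, inv_pow, inv_pow]]
  field_simp

end Part2

theorem J4_multipliable_and_identity :
    (∀ s : ℂ, 1 / 5 < s.re → Multipliable (J4Term s)) ∧
    (∀ s : ℂ, 1 < s.re →
      (∑' n : ℕ, (-2 : ℂ) ^ (cardFactors n) / (n : ℂ) ^ s) *
        (riemannZeta s ^ 2 * riemannZeta (3 * s) ^ 2) =
        riemannZeta (2 * s) ^ 3 * riemannZeta (4 * s) ^ 3 * ∏' p : Nat.Primes, J4Term s p) := by
  constructor
  · exact fun s hs => J4_multipliable hs
  · intro s hs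
    have hs0 : s ≠ 0 := Complex.ne_zero_of_one_lt_re hs
    have h2s : 1 < (2*s).re := by simp only [Complex.mul_re, Complex.re_ofNat,
      Complex.im_ofNat, zero_mul, sub_zero]; linarith
    have h3s : 1 < (3*s).re := by simp only [Complex.mul_re, Complex.re_ofNat,
      Complex.im_ofNat, zero_mul, sub_zero]; linarith
    have h4s : 1 < (4*s).re := by simp only [Complex.mul_re, Complex.re_ofNat,
      Complex.im_ofNat, zero_mul, sub_zero]; linarith
    -- Euler products
    have hFsum := negTwoOmega_summable hs
    have hF0 : HasProd (fun p : Nat.Primes => (1 - negTwoOmega s hs0 (p:ℕ))⁻¹)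
        (∑' n, negTwoOmega s hs0 n) :=
      EulerProduct.eulerProduct_completely_multiplicative_hasProd hFsum
    have hFfun : (fun p : Nat.Primes => (1 - negTwoOmega s hs0 (p:ℕ))⁻¹)
        = (fun p : Nat.Primes => (1 + 2*((p:ℕ):ℂ)^(-s))⁻¹) := by
      funext p
      have hval : negTwoOmega s hs0 (p:ℕ) = -2 * ((p:ℕ):ℂ)^(-s) := by
        show (-2:ℂ)^(Ω (p:ℕ)) * ((p:ℕ):ℂ)^(-s) = _
        rw [cardFactors_apply_prime p.prop, pow_one]
      rw [hval, show (1:ℂ) - -2*((p:ℕ):ℂ)^(-s) = 1 + 2*((p:ℕ):ℂ)^(-s) by ring]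
    rw [hFfun] at hF0
    have hz1 := riemannZeta_eulerProduct_hasProd hs
    have hz2 := riemannZeta_eulerProduct_hasProd h2s
    have hz3 := riemannZeta_eulerProduct_hasProd h3s
    have hz4 := riemannZeta_eulerProduct_hasProd h4s
    have hJ : HasProd (J4Term s) (∏' p : Nat.Primes, J4Term s p) :=
      (J4_multipliable (by linarith)).hasProd
    have hL := (hF0.mul (hz1.mul hz1)).mul (hz3.mul hz3)
    have hR := (hz2.mul (hz2.mul hz2)).mul ((hz4.mul (hz4.mul hz4)).mul hJ)
    have hfun : (fun p : Nat.Primes => (1 + 2*((p:ℕ):ℂ)^(-s))⁻¹ *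
          ((1 - ((p:ℕ):ℂ)^(-s))⁻¹ * (1 - ((p:ℕ):ℂ)^(-s))⁻¹) *
          ((1 - ((p:ℕ):ℂ)^(-(3*s)))⁻¹ * (1 - ((p:ℕ):ℂ)^(-(3*s)))⁻¹))
        = (fun p : Nat.Primes => (1 - ((p:ℕ):ℂ)^(-(2*s)))⁻¹ *
          ((1 - ((p:ℕ):ℂ)^(-(2*s)))⁻¹ * (1 - ((p:ℕ):ℂ)^(-(2*s)))⁻¹) *
          ((1 - ((p:ℕ):ℂ)^(-(4*s)))⁻¹ * ((1 - ((p:ℕ):ℂ)^(-(4*s)))⁻¹ *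
            (1 - ((p:ℕ):ℂ)^(-(4*s)))⁻¹) * J4Term s p)) := by
      funext p
      have e1 := one_sub_prime_cpow_ne_zero p (show 0 < s.re by linarith)
      have e2 := one_sub_prime_cpow_ne_zero p (show 0 < (2*s).re by linarith)
      have e3 := one_sub_prime_cpow_ne_zero p (show 0 < (3*s).re by linarith)
      have e4 := one_sub_prime_cpow_ne_zero p (show 0 < (4*s).re by linarith)
      have e12 := one_add_two_prime_cpow_ne_zero p hs
      exact factor_identity e12 e1 e2 e3 e4
    rw [hfun] at hL
    have hkey := hL.unique hR
    have htsum : (∑' n : ℕ, (-2 : ℂ) ^ (Ω n) / (n : ℂ) ^ s) = ∑' n, negTwoOmega s hs0 n := by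
      apply tsum_congr
      intro n
      show (-2 : ℂ) ^ (Ω n) / (n : ℂ) ^ s = (-2:ℂ)^(Ω n) * (n:ℂ)^(-s)
      rw [Complex.cpow_neg, div_eq_mul_inv]
    calc (∑' n : ℕ, (-2 : ℂ) ^ (Ω n) / (n : ℂ) ^ s) *
          (riemannZeta s ^ 2 * riemannZeta (3 * s) ^ 2)
        = (∑' n, negTwoOmega s hs0 n) * (riemannZeta s * riemannZeta s) *
          (riemannZeta (3*s) * riemannZeta (3*s)) := by rw [htsum]; ring
      _ = riemannZeta (2*s) * (riemannZeta (2*s) * riemannZeta (2*s)) *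
          (riemannZeta (4*s) * (riemannZeta (4*s) * riemannZeta (4*s)) *
            ∏' p : Nat.Primes, J4Term s p) := hkey
      _ = riemannZeta (2 * s) ^ 3 * riemannZeta (4 * s) ^ 3 *
          ∏' p : Nat.Primes, J4Term s p := by ring
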